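/- There exist constants C₀, C₁ > 0 depending only on δ with the following property. Let A ∈ ℂ^{m×N} satisfy the restricted isometry property of order 2s with constant δ_{2s} = δ < √2 − 1, let x ∈ ℂ^N, let η ≥ 0, and let y ∈ ℂ^m satisfy ‖y − Ax‖₂ ≤ η. Then any minimizer x♯ of ‖z‖₁ over all z ∈ ℂ^N with ‖y − Az‖₂ ≤ η satisfies ‖x♯ − x‖₂ ≤ C₀ σ_s(x)₁ / √s + C₁ η. In particular, since σ_s(x)₁ is invariant under flipping, the same error bound holds for recovering the flip of x from the same measurement matrix. -/

import Mathlib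

/-- The ℓ¹ norm of a vector in ℂ^N. -/
noncomputable def l1norm {N : ℕ} (z : Fin N → ℂ) : ℝ := ∑ i, ‖z i‖

/-- The ℓ² (Euclidean) norm of a vector. -/
noncomputable def l2norm {N : ℕ} (z : Fin N → ℂ) : ℝ := Real.sqrt (∑ i, ‖z i‖ ^ 2)

/-- `x` is `s`-sparse: it has at most `s` nonzero entries. -/
def IsSparse {N : ℕ} (s : ℕ) (x : Fin N → ℂ) : Prop := {i | x i ≠ 0}.ncard ≤ s

/-- `A` satisfies the restricted isometry property of order `k` with constant `δ`:
`(1−δ)‖x‖₂² ≤ ‖Ax‖₂² ≤ (1+δ)‖x‖₂²` for every `k`-sparse `x`. -/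
def HasRIP {m N : ℕ} (A : Matrix (Fin m) (Fin N) ℂ) (k : ℕ) (δ : ℝ) : Prop :=
  ∀ x : Fin N → ℂ, IsSparse k x →
    (1 - δ) * ∑ i, ‖x i‖ ^ 2 ≤ ∑ i, ‖A.mulVec x i‖ ^ 2 ∧
    ∑ i, ‖A.mulVec x i‖ ^ 2 ≤ (1 + δ) * ∑ i, ‖x i‖ ^ 2

/-- `σ_s(x)₁`: the error of the best `s`-term approximation of `x` in the ℓ¹ norm. -/
noncomputable def bestApprox {N : ℕ} (s : ℕ) (x : Fin N → ℂ) : ℝ :=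
  sInf {t : ℝ | ∃ w : Fin N → ℂ, IsSparse s w ∧ t = l1norm (x - w)}

/-- The flip of `x ∈ ℂ^N`: `x'_i = x_{N+1−i}` (in one-based indexing). -/
def flipVec {N : ℕ} (x : Fin N → ℂ) : Fin N → ℂ := fun i => x i.rev



namespace RIPW
variable {α : Type*} [DecidableEq α]

lemma exists_topk (f : α → ℝ) : ∀ (k : ℕ) (U : Finset α),
    ∃ S : Finset α, S ⊆ U ∧ S.card = min k U.card ∧
      ∀ i ∈ S, ∀ j ∈ U, j ∉ S → f j ≤ f i := by
  intro k
  induction k with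
  | zero => intro U; exact ⟨∅, by simp⟩
  | succ k ih =>
    intro U
    rcases U.eq_empty_or_nonempty with rfl | hU
    · exact ⟨∅, by simp⟩
    · obtain ⟨i₀, hi₀U, hi₀max⟩ := U.exists_max_image f hU
      obtain ⟨S', hS'sub, hS'card, hS'max⟩ := ih (U.erase i₀)
      refine ⟨insert i₀ S', ?_, ?_, ?_⟩
      · intro a ha
        rcases Finset.mem_insert.mp ha with rfl | ha
        · exact hi₀U
        · exact Finset.mem_of_mem_erase (hS'sub ha)
      · have hni : i₀ ∉ S' := fun h => (Finset.mem_erase.mp (hS'sub h)).1 rfl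
        rw [Finset.card_insert_of_notMem hni, hS'card,
          Finset.card_erase_of_mem hi₀U]
        have h1 : 1 ≤ U.card := Finset.card_pos.mpr hU
        omega
      · intro i hi j hjU hjS
        have hj' : f j ≤ f i₀ := hi₀max j hjU
        have hji : j ≠ i₀ := fun h => hjS (h ▸ Finset.mem_insert_self i₀ S')
        rcases Finset.mem_insert.mp hi with rfl | hi
        · exact hj'
        · exact hS'max i hi j (Finset.mem_erase.mpr ⟨hji, hjU⟩)
            (fun h => hjS (Finset.mem_insert_of_mem h))

end RIPW

namespace RIPW
variable {α : Type*} [DecidableEq α]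

noncomputable def tops (f : α → ℝ) (k : ℕ) (U : Finset α) : Finset α :=
  (exists_topk f k U).choose

lemma tops_subset (f : α → ℝ) (k : ℕ) (U : Finset α) : tops f k U ⊆ U :=
  (exists_topk f k U).choose_spec.1

lemma tops_card (f : α → ℝ) (k : ℕ) (U : Finset α) : (tops f k U).card = min k U.card :=
  (exists_topk f k U).choose_spec.2.1

lemma tops_max (f : α → ℝ) (k : ℕ) (U : Finset α) :
    ∀ i ∈ tops f k U, ∀ j ∈ U, j ∉ tops f k U → f j ≤ f i :=
  (exists_topk f k U).choose_spec.2.2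

noncomputable def rem (f : α → ℝ) (k : ℕ) (U₀ : Finset α) : ℕ → Finset α
  | 0 => U₀
  | (j+1) => rem f k U₀ j \ tops f k (rem f k U₀ j)

noncomputable def blk (f : α → ℝ) (k : ℕ) (U₀ : Finset α) (j : ℕ) : Finset α :=
  tops f k (rem f k U₀ j)

variable (f : α → ℝ) (k : ℕ) (U₀ : Finset α)

lemma rem_succ (j : ℕ) : rem f k U₀ (j+1) = rem f k U₀ j \ blk f k U₀ j := rfl

lemma blk_subset_rem (j : ℕ) : blk f k U₀ j ⊆ rem f k U₀ j := tops_subset _ _ _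

lemma blk_card (j : ℕ) : (blk f k U₀ j).card = min k (rem f k U₀ j).card := tops_card _ _ _

lemma rem_subset_succ (j : ℕ) : rem f k U₀ (j+1) ⊆ rem f k U₀ j :=
  Finset.sdiff_subset

lemma rem_subset (j : ℕ) : rem f k U₀ j ⊆ U₀ := by
  induction j with
  | zero => exact Finset.Subset.refl _
  | succ j ih => exact (rem_subset_succ f k U₀ j).trans ih

lemma blk_subset (j : ℕ) : blk f k U₀ j ⊆ U₀ :=
  (blk_subset_rem f k U₀ j).trans (rem_subset f k U₀ j)

lemma rem_le (i j : ℕ) (h : i ≤ j) : rem f k U₀ j ⊆ rem f k U₀ i := by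
  induction j with
  | zero => simpa [Nat.le_zero.mp h] using le_refl _
  | succ j ih =>
    rcases Nat.lt_or_ge i (j+1) with h' | h'
    · exact (rem_subset_succ f k U₀ j).trans (ih (Nat.lt_succ_iff.mp h'))
    · have : i = j + 1 := le_antisymm h h'
      simp [this]

lemma blk_disjoint {i j : ℕ} (h : i < j) : Disjoint (blk f k U₀ i) (blk f k U₀ j) := by
  have h1 : blk f k U₀ j ⊆ rem f k U₀ (i+1) :=
    (blk_subset_rem f k U₀ j).trans (rem_le f k U₀ (i+1) j h)
  rw [rem_succ] at h1
  exact Finset.disjoint_left.mpr fun a ha hb =>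
    (Finset.mem_sdiff.mp (h1 hb)).2 ha

lemma sum_rem_decomp {M : Type*} [AddCommMonoid M] (φ : α → M) (K : ℕ) :
    ∑ i ∈ U₀, φ i = (∑ j ∈ Finset.range K, ∑ i ∈ blk f k U₀ j, φ i)
      + ∑ i ∈ rem f k U₀ K, φ i := by
  induction K with
  | zero => simp [rem]
  | succ K ih =>
    rw [ih, Finset.sum_range_succ, rem_succ,
      ← Finset.sum_sdiff (blk_subset_rem f k U₀ K)]
    abel

lemma rem_card_le (hk : 1 ≤ k) (j : ℕ) : (rem f k U₀ j).card ≤ U₀.card - j := by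
  induction j with
  | zero => simp [rem]
  | succ j ih =>
    rcases (rem f k U₀ j).eq_empty_or_nonempty with he | hne
    · have : rem f k U₀ (j+1) = ∅ := by rw [rem_succ, he]; simp
      simp [this]
    · have hc : 1 ≤ (rem f k U₀ j).card := Finset.card_pos.mpr hne
      have : (rem f k U₀ (j+1)).card = (rem f k U₀ j).card - (blk f k U₀ j).card := by
        rw [rem_succ, Finset.card_sdiff_of_subset (blk_subset_rem f k U₀ j)]
      rw [this, blk_card]
      omega

lemma rem_empty (hk : 1 ≤ k) (K : ℕ) (hK : U₀.card ≤ K) : rem f k U₀ K = ∅ := by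
  have := rem_card_le f k U₀ hk K
  rw [Finset.card_eq_zero.symm]
  omega

lemma blk_small (j : ℕ) (h : (blk f k U₀ j).card < k) : blk f k U₀ (j+1) = ∅ := by
  have h1 := blk_card f k U₀ j
  have h2 : (rem f k U₀ j).card < k := by omega
  have h3 : (blk f k U₀ j).card = (rem f k U₀ j).card := by omega
  have h4 : blk f k U₀ j = rem f k U₀ j :=
    Finset.eq_of_subset_of_card_le (blk_subset_rem f k U₀ j) (le_of_eq h3.symm)
  have h5 : rem f k U₀ (j+1) = ∅ := by rw [rem_succ, h4]; simp
  have := blk_card f k U₀ (j+1)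
  rw [h5] at this
  simp at this
  exact this

lemma blk_order (j : ℕ) :
    ∀ i ∈ blk f k U₀ (j+1), ∀ i' ∈ blk f k U₀ j, f i ≤ f i' := by
  intro i hi i' hi'
  have h1 : i ∈ rem f k U₀ (j+1) := blk_subset_rem f k U₀ (j+1) hi
  rw [rem_succ] at h1
  obtain ⟨h2, h3⟩ := Finset.mem_sdiff.mp h1
  exact tops_max f k (rem f k U₀ j) i' hi' i h2 h3

end RIPW

namespace RIPW


noncomputable def E {n : ℕ} (z : Fin n → ℂ) : EuclideanSpace ℂ (Fin n) := (WithLp.equiv 2 _).symm z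

lemma E_add {n : ℕ} (u v : Fin n → ℂ) : E (u + v) = E u + E v := rfl
lemma E_sub {n : ℕ} (u v : Fin n → ℂ) : E (u - v) = E u - E v := rfl

lemma l2_eq {n : ℕ} (z : Fin n → ℂ) : l2norm z = ‖E z‖ := by
  rw [EuclideanSpace.norm_eq]; rfl

lemma sum_sq_eq {n : ℕ} (z : Fin n → ℂ) : ∑ i, ‖z i‖ ^ 2 = ‖E z‖ ^ 2 := by
  rw [EuclideanSpace.norm_eq, Real.sq_sqrt (by positivity)]; rfl

def rst {N : ℕ} (S : Finset (Fin N)) (z : Fin N → ℂ) : Fin N → ℂ :=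
  fun i => if i ∈ S then z i else 0

lemma rst_sparse {N : ℕ} (S : Finset (Fin N)) (z : Fin N → ℂ) {k : ℕ} (h : S.card ≤ k) :
    IsSparse k (rst S z) := by
  unfold IsSparse
  have h1 : {i | rst S z i ≠ 0} ⊆ (S : Set (Fin N)) := by
    intro i hi
    simp only [Set.mem_setOf_eq, rst, ne_eq] at hi
    by_cases hS : i ∈ S
    · exact hS
    · simp [hS] at hi
  calc {i | rst S z i ≠ 0}.ncard ≤ (S : Set (Fin N)).ncard :=
        Set.ncard_le_ncard h1 (S.finite_toSet)
    _ = S.card := Set.ncard_coe_finset S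
    _ ≤ k := h

lemma sum_sq_rst {N : ℕ} (S : Finset (Fin N)) (z : Fin N → ℂ) :
    ∑ i, ‖rst S z i‖ ^ 2 = ∑ i ∈ S, ‖z i‖ ^ 2 := by
  rw [← Finset.sum_subset (Finset.subset_univ S)]
  · exact Finset.sum_congr rfl fun i hi => by simp [rst, hi]
  · intro i _ hi; simp [rst, hi]

lemma sum_rst {N : ℕ} (S : Finset (Fin N)) (z : Fin N → ℂ) :
    ∑ i, ‖rst S z i‖ = ∑ i ∈ S, ‖z i‖ := by
  rw [← Finset.sum_subset (Finset.subset_univ S)]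
  · exact Finset.sum_congr rfl fun i hi => by simp [rst, hi]
  · intro i _ hi; simp [rst, hi]

lemma rst_union {N : ℕ} {S T : Finset (Fin N)} (h : Disjoint S T) (z : Fin N → ℂ) :
    rst (S ∪ T) z = rst S z + rst T z := by
  funext i
  simp only [rst, Pi.add_apply, Finset.mem_union]
  by_cases hS : i ∈ S <;> by_cases hT : i ∈ T
  · exact absurd (Finset.disjoint_left.mp h hS hT) (fun x => x)
  all_goals simp [hS, hT]

-- real inner product
noncomputable def rinner {n : ℕ} (u v : Fin n → ℂ) : ℝ := (inner ℂ (E u) (E v) : ℂ).re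

lemma rinner_self {n : ℕ} (u : Fin n → ℂ) : rinner u u = ‖E u‖ ^ 2 := by
  unfold rinner
  rw [← RCLike.re_to_complex]
  exact inner_self_eq_norm_sq _

lemma abs_rinner_le {n : ℕ} (u v : Fin n → ℂ) : |rinner u v| ≤ ‖E u‖ * ‖E v‖ := by
  calc |rinner u v| ≤ ‖(inner ℂ (E u) (E v) : ℂ)‖ := Complex.abs_re_le_norm _
    _ ≤ ‖E u‖ * ‖E v‖ := norm_inner_le_norm _ _

lemma rinner_symm {n : ℕ} (u v : Fin n → ℂ) : rinner u v = rinner v u := by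
  unfold rinner
  rw [← inner_conj_symm]
  simp only [Complex.conj_re]

lemma polar {n : ℕ} (a b : EuclideanSpace ℂ (Fin n)) :
    ((inner ℂ (a+b) (a+b) : ℂ)).re - ((inner ℂ (a-b) (a-b) : ℂ)).re
      = 4 * ((inner ℂ a b : ℂ)).re := by
  have hsymm : ((inner ℂ b a : ℂ)).re = ((inner ℂ a b : ℂ)).re := by
    rw [← inner_conj_symm]; simp only [Complex.conj_re]
  have h1 : ((inner ℂ (a+b) (a+b) : ℂ)).re
      = ((inner ℂ a a : ℂ)).re + ((inner ℂ a b : ℂ)).re + ((inner ℂ b a : ℂ)).re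
        + ((inner ℂ b b : ℂ)).re := by
    rw [inner_add_add_self]; simp only [Complex.add_re]
  have h2 : ((inner ℂ (a-b) (a-b) : ℂ)).re
      = ((inner ℂ a a : ℂ)).re - ((inner ℂ a b : ℂ)).re - ((inner ℂ b a : ℂ)).re
        + ((inner ℂ b b : ℂ)).re := by
    rw [inner_sub_sub_self]; simp only [Complex.add_re, Complex.sub_re]
  rw [h1, h2]; linarith

end RIPW

namespace RIPW
variable {m N : ℕ}

lemma hasRIP_bounds {A : Matrix (Fin m) (Fin N) ℂ} {k : ℕ} {δ : ℝ} (hA : HasRIP A k δ)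
    {u : Fin N → ℂ} (hu : IsSparse k u) :
    (1 - δ) * ‖E u‖ ^ 2 ≤ ‖E (A.mulVec u)‖ ^ 2 ∧
      ‖E (A.mulVec u)‖ ^ 2 ≤ (1 + δ) * ‖E u‖ ^ 2 := by
  have := hA u hu
  rwa [sum_sq_eq, sum_sq_eq] at this

lemma E_smul {n : ℕ} (c : ℂ) (u : Fin n → ℂ) : E (c • u) = c • E u := rfl

lemma rinner_smul_left {n : ℕ} (c : ℝ) (u v : Fin n → ℂ) :
    rinner ((c : ℂ) • u) v = c * rinner u v := by
  unfold rinner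
  rw [E_smul, inner_smul_left]
  simp [Complex.mul_re]

lemma rinner_smul_right {n : ℕ} (c : ℝ) (u v : Fin n → ℂ) :
    rinner u ((c : ℂ) • v) = c * rinner u v := by
  unfold rinner
  rw [E_smul, inner_smul_right]
  simp [Complex.mul_re]

lemma sparse_mono {s : ℕ} {u w : Fin N → ℂ} (hu : IsSparse s u)
    (h : ∀ i, w i ≠ 0 → u i ≠ 0) : IsSparse s w :=
  le_trans (Set.ncard_le_ncard h (Set.toFinite _)) hu

lemma restricted_orth {A : Matrix (Fin m) (Fin N) ℂ} {s : ℕ} {δ : ℝ}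
    (hA : HasRIP A (2 * s) δ) (hδ : 0 ≤ δ) {u v : Fin N → ℂ}
    (hu : IsSparse s u) (hv : IsSparse s v) (hdisj : ∀ i, u i = 0 ∨ v i = 0) :
    |rinner (A.mulVec u) (A.mulVec v)| ≤ δ * (‖E u‖ * ‖E v‖) := by
  have rinner_zl : ∀ w : Fin m → ℂ, rinner (0 : Fin m → ℂ) w = 0 := by
    intro w
    unfold rinner
    rw [show E (0 : Fin m → ℂ) = 0 from rfl, inner_zero_left]
    simp
  have Ezero : ‖E (0 : Fin N → ℂ)‖ = 0 := by
    rw [show E (0 : Fin N → ℂ) = 0 from rfl, norm_zero]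
  -- zero cases
  rcases eq_or_ne u 0 with rfl | hu0
  · rw [Matrix.mulVec_zero, rinner_zl, Ezero]
    simp [mul_nonneg hδ (mul_nonneg (le_refl 0) (norm_nonneg _))]
  rcases eq_or_ne v 0 with rfl | hv0
  · rw [Matrix.mulVec_zero, rinner_symm, rinner_zl, Ezero]
    simp
  -- main case
  have ha : 0 < ‖E u‖ := by
    rcases (norm_nonneg (E u)).lt_or_eq with h | h
    · exact h
    · exfalso; apply hu0; funext i
      have h2 : E u = 0 := norm_eq_zero.mp h.symm
      exact congrFun (congrArg WithLp.ofLp h2) i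
  have hb : 0 < ‖E v‖ := by
    rcases (norm_nonneg (E v)).lt_or_eq with h | h
    · exact h
    · exfalso; apply hv0; funext i
      have h2 : E v = 0 := norm_eq_zero.mp h.symm
      exact congrFun (congrArg WithLp.ofLp h2) i
  set a := ‖E u‖
  set b := ‖E v‖
  set u' : Fin N → ℂ := ((a⁻¹ : ℝ) : ℂ) • u with hu'def
  set v' : Fin N → ℂ := ((b⁻¹ : ℝ) : ℂ) • v with hv'def
  have hu'n : ‖E u'‖ = 1 := by
    rw [hu'def, E_smul, norm_smul, Complex.norm_real, Real.norm_eq_abs,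
      abs_of_pos (inv_pos.mpr ha)]
    exact inv_mul_cancel₀ (ne_of_gt ha)
  have hv'n : ‖E v'‖ = 1 := by
    rw [hv'def, E_smul, norm_smul, Complex.norm_real, Real.norm_eq_abs,
      abs_of_pos (inv_pos.mpr hb)]
    exact inv_mul_cancel₀ (ne_of_gt hb)
  have hu's : IsSparse s u' := sparse_mono hu (by
    intro i hi h0
    apply hi; rw [hu'def]; simp [h0])
  have hv's : IsSparse s v' := sparse_mono hv (by
    intro i hi h0
    apply hi; rw [hv'def]; simp [h0])
  have hdisj' : ∀ i, u' i = 0 ∨ v' i = 0 := by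
    intro i
    rcases hdisj i with h | h
    · left; rw [hu'def]; simp [h]
    · right; rw [hv'def]; simp [h]
  -- sum sparsity of u' ± v'
  have hsparse_pm : ∀ (c : ℂ), IsSparse (2 * s) (u' + c • v') := by
    intro c
    unfold IsSparse
    have hsub : {i | (u' + c • v') i ≠ 0} ⊆ {i | u' i ≠ 0} ∪ {i | v' i ≠ 0} := by
      intro i hi
      by_contra hcon
      simp only [Set.mem_union, Set.mem_setOf_eq] at hcon
      push_neg at hcon
      apply hi
      simp [hcon.1, hcon.2]
    calc {i | (u' + c • v') i ≠ 0}.ncard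
        ≤ ({i | u' i ≠ 0} ∪ {i | v' i ≠ 0}).ncard :=
          Set.ncard_le_ncard hsub (Set.toFinite _)
      _ ≤ {i | u' i ≠ 0}.ncard + {i | v' i ≠ 0}.ncard := Set.ncard_union_le _ _
      _ ≤ s + s := add_le_add hu's hv's
      _ = 2 * s := by ring
  have hnorm_pm : ∀ (c : ℂ), ‖c‖ = 1 → ‖E (u' + c • v')‖ ^ 2 = 2 := by
    intro c hc
    rw [← sum_sq_eq]
    have : ∀ i, ‖(u' + c • v') i‖ ^ 2 = ‖u' i‖ ^ 2 + ‖v' i‖ ^ 2 := by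
      intro i
      rcases hdisj' i with h | h
      · simp [h, norm_smul, hc]
      · simp [h]
    rw [Finset.sum_congr rfl fun i _ => this i, Finset.sum_add_distrib]
    rw [sum_sq_eq, sum_sq_eq, hu'n, hv'n]
    norm_num
  have hplus := hasRIP_bounds hA (hsparse_pm 1)
  have hminus := hasRIP_bounds hA (hsparse_pm (-1))
  rw [hnorm_pm 1 (by norm_num)] at hplus
  rw [hnorm_pm (-1) (by norm_num)] at hminus
  have hepl : E (A.mulVec (u' + (1 : ℂ) • v')) = E (A.mulVec u') + E (A.mulVec v') := by
    rw [one_smul, Matrix.mulVec_add]; rfl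
  have hemn : E (A.mulVec (u' + (-1 : ℂ) • v')) = E (A.mulVec u') - E (A.mulVec v') := by
    rw [neg_one_smul, Matrix.mulVec_add, Matrix.mulVec_neg, ← sub_eq_add_neg]; rfl
  have hpolar := polar (E (A.mulVec u')) (E (A.mulVec v'))
  have hinsq : ∀ w : Fin m → ℂ, ((inner ℂ (E w) (E w) : ℂ)).re = ‖E w‖ ^ 2 := fun w => rinner_self w
  have key : |rinner (A.mulVec u') (A.mulVec v')| ≤ δ := by
    have e1 : ((inner ℂ (E (A.mulVec u') + E (A.mulVec v'))
        (E (A.mulVec u') + E (A.mulVec v')) : ℂ)).re = ‖E (A.mulVec (u' + (1:ℂ) • v'))‖ ^ 2 := by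
      rw [← hepl]
      exact hinsq _
    have e2 : ((inner ℂ (E (A.mulVec u') - E (A.mulVec v'))
        (E (A.mulVec u') - E (A.mulVec v')) : ℂ)).re = ‖E (A.mulVec (u' + (-1:ℂ) • v'))‖ ^ 2 := by
      rw [← hemn]
      exact hinsq _
    rw [e1, e2] at hpolar
    have h1 : 4 * rinner (A.mulVec u') (A.mulVec v')
        = ‖E (A.mulVec (u' + (1:ℂ) • v'))‖ ^ 2 - ‖E (A.mulVec (u' + (-1:ℂ) • v'))‖ ^ 2 := by
      exact hpolar.symm
    rw [abs_le]
    constructor <;> nlinarith [hplus.1, hplus.2, hminus.1, hminus.2]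
  -- scale back
  have hscale : rinner (A.mulVec u) (A.mulVec v)
      = a * b * rinner (A.mulVec u') (A.mulVec v') := by
    rw [hu'def, hv'def, Matrix.mulVec_smul, Matrix.mulVec_smul,
      rinner_smul_left, rinner_smul_right]
    field_simp
  rw [hscale, abs_mul]
  have : |a * b| = a * b := abs_of_pos (mul_pos ha hb)
  rw [this]
  calc a * b * |rinner (A.mulVec u') (A.mulVec v')| ≤ a * b * δ :=
      mul_le_mul_of_nonneg_left key (le_of_lt (mul_pos ha hb))
    _ = δ * (a * b) := by ring

end RIPW

namespace RIPW
variable {m N : ℕ}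

lemma le_of_sq_le_sq {a b : ℝ} (ha : 0 ≤ a) (hb : 0 ≤ b) (h : a^2 ≤ b^2) : a ≤ b := by
  nlinarith

lemma E_sum {n : ℕ} {ι : Type*} (t : Finset ι) (w : ι → Fin n → ℂ) :
    E (∑ j ∈ t, w j) = ∑ j ∈ t, E (w j) := by
  classical
  induction t using Finset.induction with
  | empty => rfl
  | insert _ _ h ih => rw [Finset.sum_insert h, Finset.sum_insert h, E_add, ih]

lemma rinner_sum {n : ℕ} {ι : Type*} (u : Fin n → ℂ) (t : Finset ι) (w : ι → Fin n → ℂ) :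
    rinner u (∑ j ∈ t, w j) = ∑ j ∈ t, rinner u (w j) := by
  unfold rinner
  rw [E_sum, inner_sum, Complex.re_sum]

lemma rinner_add_right {n : ℕ} (u v w : Fin n → ℂ) :
    rinner u (v + w) = rinner u v + rinner u w := by
  unfold rinner
  rw [E_add, inner_add_right, Complex.add_re]

end RIPW

namespace RIPW
variable {m N : ℕ}

lemma sum_max_of_pointwise {α : Type*} [DecidableEq α] (f : α → ℝ) (hf : ∀ i, 0 ≤ f i)
    (T S : Finset α) (hcard : S.card ≤ T.card)
    (hmax : ∀ i ∈ T, ∀ j ∈ S, j ∉ T → f j ≤ f i) :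
    ∑ i ∈ S, f i ≤ ∑ i ∈ T, f i := by
  have hST : ∑ i ∈ S, f i = ∑ i ∈ S ∩ T, f i + ∑ i ∈ S \ T, f i := by
    rw [Finset.sum_inter_add_sum_sdiff]
  have hTS : ∑ i ∈ T, f i = ∑ i ∈ T ∩ S, f i + ∑ i ∈ T \ S, f i := by
    rw [Finset.sum_inter_add_sum_sdiff]
  have hIeq : ∑ i ∈ S ∩ T, f i = ∑ i ∈ T ∩ S, f i := by rw [Finset.inter_comm]
  have hcard2 : (S \ T).card ≤ (T \ S).card := by
    have h1 : S.card = (S ∩ T).card + (S \ T).card :=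
      (Finset.card_inter_add_card_sdiff S T).symm
    have h2 : T.card = (T ∩ S).card + (T \ S).card :=
      (Finset.card_inter_add_card_sdiff T S).symm
    have h3 : (S ∩ T).card = (T ∩ S).card := by rw [Finset.inter_comm]
    omega
  have key : ∑ i ∈ S \ T, f i ≤ ∑ i ∈ T \ S, f i := by
    rcases (T \ S).eq_empty_or_nonempty with he | hne
    · have h0 : (S \ T).card = 0 := by
        rw [he] at hcard2; simpa using hcard2
      have h0' : S \ T = ∅ := Finset.card_eq_zero.mp h0
      rw [h0', he]
    · obtain ⟨i₀, hi₀mem, hi₀min⟩ := (T \ S).exists_min_image f hne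
      have hi₀T : i₀ ∈ T := (Finset.mem_sdiff.mp hi₀mem).1
      calc ∑ i ∈ S \ T, f i ≤ (S \ T).card • f i₀ := by
            apply Finset.sum_le_card_nsmul
            intro j hj
            exact hmax i₀ hi₀T j (Finset.mem_sdiff.mp hj).1 (Finset.mem_sdiff.mp hj).2
        _ ≤ (T \ S).card • f i₀ := nsmul_le_nsmul_left (hf i₀) hcard2
        _ ≤ ∑ i ∈ T \ S, f i := Finset.card_nsmul_le_sum _ _ _ hi₀min
  linarith

lemma tail_le_bestApprox (s : ℕ) (x : Fin N → ℂ) :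
    ∑ i ∈ Finset.univ \ tops (fun i => ‖x i‖) s Finset.univ, ‖x i‖ ≤ bestApprox s x := by
  classical
  set f : Fin N → ℝ := fun i => ‖x i‖ with hf
  set T₀ := tops f s Finset.univ with hT₀
  apply le_csInf
  · exact ⟨l1norm (x - 0), 0, by simp [IsSparse], rfl⟩
  · rintro t ⟨w, hw, rfl⟩
    set S : Finset (Fin N) := Finset.univ.filter (fun i => w i ≠ 0) with hS
    have hScard : S.card ≤ s := by
      have h1 : (S : Set (Fin N)) = {i | w i ≠ 0} := by
        ext i; simp [hS]
      have h2 : S.card = {i | w i ≠ 0}.ncard := by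
        rw [← Set.ncard_coe_finset, h1]
      rw [h2] at *; exact hw
    have hcard : S.card ≤ T₀.card := by
      rw [hT₀, tops_card]
      exact le_min hScard (Finset.card_le_card (Finset.subset_univ S))
    have hsum_max : ∑ i ∈ S, f i ≤ ∑ i ∈ T₀, f i := by
      apply sum_max_of_pointwise f (fun i => norm_nonneg _) T₀ S hcard
      intro i hi j _ hj
      exact tops_max f s Finset.univ i hi j (Finset.mem_univ j) hj
    have e1 := Finset.sum_sdiff (f := f) (Finset.subset_univ T₀)
    have e2 := Finset.sum_sdiff (f := f) (Finset.subset_univ S)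
    have hcompl : ∑ i ∈ Finset.univ \ T₀, f i ≤ ∑ i ∈ Finset.univ \ S, f i := by
      linarith
    calc ∑ i ∈ Finset.univ \ T₀, f i ≤ ∑ i ∈ Finset.univ \ S, f i := hcompl
      _ = ∑ i ∈ Finset.univ \ S, ‖x i - w i‖ := by
          apply Finset.sum_congr rfl
          intro i hi
          have hwi : w i = 0 := by
            have := (Finset.mem_sdiff.mp hi).2
            simp [hS] at this
            exact this
          simp [hf, hwi]
      _ ≤ ∑ i, ‖x i - w i‖ := by
          apply Finset.sum_le_sum_of_subset_of_nonneg (Finset.sdiff_subset)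
          intro i _ _; exact norm_nonneg _
      _ = l1norm (x - w) := by
          unfold l1norm
          exact Finset.sum_congr rfl fun i _ => rfl

end RIPW

namespace RIPW
variable {m N : ℕ}

lemma sum_rem_decomp_from {α : Type*} [DecidableEq α] (f : α → ℝ) (k : ℕ) (U₀ : Finset α)
    {M : Type*} [AddCommMonoid M] (φ : α → M) (j₀ K : ℕ) :
    ∑ i ∈ rem f k U₀ j₀, φ i
      = (∑ j ∈ Finset.range K, ∑ i ∈ blk f k U₀ (j₀ + j), φ i)
        + ∑ i ∈ rem f k U₀ (j₀ + K), φ i := by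
  induction K with
  | zero => simp
  | succ K ih =>
    rw [ih, Finset.sum_range_succ]
    have : ∑ i ∈ rem f k U₀ (j₀ + K), φ i
        = ∑ i ∈ blk f k U₀ (j₀ + K), φ i + ∑ i ∈ rem f k U₀ (j₀ + (K+1)), φ i := by
      have h1 : rem f k U₀ (j₀ + (K+1)) = rem f k U₀ (j₀ + K) \ blk f k U₀ (j₀ + K) := by
        rw [show j₀ + (K+1) = (j₀ + K) + 1 by omega, rem_succ]
      rw [h1, ← Finset.sum_sdiff (blk_subset_rem f k U₀ (j₀ + K))]
      abel
    rw [this]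
    abel

lemma rst_split {S B' : Finset (Fin N)} (hB : B' ⊆ S) (z : Fin N → ℂ) :
    rst S z = rst B' z + rst (S \ B') z := by
  funext i
  simp only [rst, Pi.add_apply, Finset.mem_sdiff]
  by_cases hiB : i ∈ B'
  · simp [hiB, hB hiB]
  · by_cases hiS : i ∈ S <;> simp [hiB, hiS]

lemma rst_empty (z : Fin N → ℂ) : rst (∅ : Finset (Fin N)) z = 0 := by
  funext i; simp [rst]

lemma rinner_add_left {n : ℕ} (u v w : Fin n → ℂ) :
    rinner (u + v) w = rinner u w + rinner v w := by
  rw [rinner_symm, rinner_add_right, rinner_symm w u, rinner_symm w v]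

lemma mulVec_sum {ι : Type*} (A : Matrix (Fin m) (Fin N) ℂ) (t : Finset ι)
    (v : ι → Fin N → ℂ) :
    A.mulVec (∑ j ∈ t, v j) = ∑ j ∈ t, A.mulVec (v j) := by
  classical
  induction t using Finset.induction with
  | empty => simp [Matrix.mulVec_zero]
  | insert _ _ h ih => rw [Finset.sum_insert h, Finset.sum_insert h, Matrix.mulVec_add, ih]

end RIPW

namespace RIPW
variable {m N : ℕ}

set_option maxHeartbeats 2000000 in
lemma main_recovery (δ : ℝ) (hδ0 : 0 < δ) (hδ : δ < Real.sqrt 2 - 1)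
    (s : ℕ) (hs : 1 ≤ s) (A : Matrix (Fin m) (Fin N) ℂ) (hA : HasRIP A (2 * s) δ)
    (x : Fin N → ℂ) (η : ℝ) (hη : 0 ≤ η)
    (y : Fin m → ℂ) (hy : l2norm (y - A.mulVec x) ≤ η)
    (xs : Fin N → ℂ) (hxs : l2norm (y - A.mulVec xs) ≤ η)
    (hmin : ∀ z : Fin N → ℂ, l2norm (y - A.mulVec z) ≤ η → l1norm xs ≤ l1norm z) :
    l2norm (xs - x) ≤ (8 / (1 - δ - Real.sqrt 2 * δ) + 2) * bestApprox s x / Real.sqrt s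
      + (8 / (1 - δ - Real.sqrt 2 * δ)) * η := by
  classical
  have hsqrt2 : (Real.sqrt 2) ^ 2 = 2 := Real.sq_sqrt (by norm_num)
  have hsqrt2pos : 0 < Real.sqrt 2 := Real.sqrt_pos.mpr (by norm_num)
  set β : ℝ := 1 - δ - Real.sqrt 2 * δ with hβdef
  have hβ : 0 < β := by nlinarith
  have hδ1 : δ < 1 := by nlinarith
  have hspos : (0 : ℝ) < s := by exact_mod_cast hs
  have hss : 0 < Real.sqrt s := Real.sqrt_pos.mpr hspos
  have hsssq : (Real.sqrt s) ^ 2 = (s : ℝ) := Real.sq_sqrt (le_of_lt hspos)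
  set h : Fin N → ℂ := xs - x with hhdef
  set g : Fin N → ℝ := fun i => ‖h i‖ with hgdef
  set f : Fin N → ℝ := fun i => ‖x i‖ with hfdef
  set T₀ : Finset (Fin N) := tops f s Finset.univ with hT₀def
  set U₀ : Finset (Fin N) := Finset.univ \ T₀ with hU₀def
  set B : ℕ → Finset (Fin N) := blk g s U₀ with hBdef
  set R : ℕ → Finset (Fin N) := rem g s U₀ with hRdef
  set T : Finset (Fin N) := T₀ ∪ B 0 with hTdef
  have hxs_eq : xs = x + h := by rw [hhdef]; abel
  -- membership basics
  have hB0U : B 0 ⊆ U₀ := blk_subset g s U₀ 0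
  have hBU : ∀ j, B j ⊆ U₀ := fun j => blk_subset g s U₀ j
  have hdisjT₀B0 : Disjoint T₀ (B 0) := by
    rw [Finset.disjoint_left]
    intro i hi hib
    exact (Finset.mem_sdiff.mp (hB0U hib)).2 hi
  have hR0 : R 0 = U₀ := rfl
  have hR1 : R 1 = U₀ \ B 0 := rfl
  have hU₀card : U₀.card ≤ N := by
    calc U₀.card ≤ (Finset.univ : Finset (Fin N)).card := Finset.card_le_card (by simp [hU₀def])
      _ = N := by simp
  have hRN : R N = ∅ := rem_empty g s U₀ hs N hU₀card
  have hRN1 : R (N + 1) = ∅ := by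
    rw [hRdef] at hRN ⊢
    rw [rem_succ, hRN]
    simp
  have hT₀card : T₀.card ≤ s := by
    rw [hT₀def, tops_card]; exact min_le_left _ _
  have hBcard : ∀ j, (B j).card ≤ s := by
    intro j; rw [hBdef, blk_card]; exact min_le_left _ _
  have hTcard : T.card ≤ 2 * s := by
    calc T.card ≤ T₀.card + (B 0).card := Finset.card_union_le _ _
      _ ≤ s + s := add_le_add hT₀card (hBcard 0)
      _ = 2 * s := by ring
  -- quantities
  set L0 : ℝ := ‖E (rst T₀ h)‖ with hL0def
  set L1b : ℝ := ‖E (rst (B 0) h)‖ with hL1bdef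
  set LT : ℝ := ‖E (rst T h)‖ with hLTdef
  set AL : ℝ := ‖E (A.mulVec (rst T h))‖ with hALdef
  set Lj : ℕ → ℝ := fun j => ‖E (rst (B (j + 1)) h)‖ with hLjdef
  set P : ℝ := ∑ j ∈ Finset.range N, Lj j with hPdef
  set e0 : ℝ := ∑ i ∈ U₀, f i with he0def
  set G0 : ℝ := ∑ i ∈ T₀, g i with hG0def
  set GU : ℝ := ∑ i ∈ U₀, g i with hGUdef
  have he0nn : 0 ≤ e0 := Finset.sum_nonneg fun i _ => norm_nonneg _
  have hP0 : 0 ≤ P := Finset.sum_nonneg fun j _ => norm_nonneg _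
  -- cone constraint
  have hcone : GU ≤ G0 + 2 * e0 := by
    have hfeas := hmin x hy
    have hsplit1 : ∑ i ∈ U₀, f i + ∑ i ∈ T₀, f i = l1norm x :=
      Finset.sum_sdiff (f := f) (Finset.subset_univ T₀)
    have hxssum : l1norm xs = ∑ i, ‖x i + h i‖ := by
      unfold l1norm
      exact Finset.sum_congr rfl fun i _ => by rw [hxs_eq]; rfl
    have hsplit2 : ∑ i ∈ U₀, ‖x i + h i‖ + ∑ i ∈ T₀, ‖x i + h i‖ = ∑ i, ‖x i + h i‖ :=
      Finset.sum_sdiff (Finset.subset_univ T₀)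
    have hlb1 : ∑ i ∈ T₀, (f i - g i) ≤ ∑ i ∈ T₀, ‖x i + h i‖ := by
      apply Finset.sum_le_sum
      intro i _
      have := abs_norm_sub_norm_le (x i + h i) (x i)
      have h2 : ‖x i + h i - x i‖ = g i := by
        rw [add_sub_cancel_left]
      rw [h2] at this
      have := abs_le.mp this
      linarith [this.1]
    have hlb2 : ∑ i ∈ U₀, (g i - f i) ≤ ∑ i ∈ U₀, ‖x i + h i‖ := by
      apply Finset.sum_le_sum
      intro i _
      have := abs_norm_sub_norm_le (x i + h i) (h i)
      have h2 : ‖x i + h i - h i‖ = f i := by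
        rw [add_sub_cancel_right]
      rw [h2] at this
      have := abs_le.mp this
      linarith [this.1]
    have hsum1 : ∑ i ∈ T₀, (f i - g i) = ∑ i ∈ T₀, f i - G0 := by
      rw [Finset.sum_sub_distrib]
    have hsum2 : ∑ i ∈ U₀, (g i - f i) = GU - e0 := by
      rw [Finset.sum_sub_distrib]
    rw [hxssum] at hfeas
    linarith
  -- best approx
  have he0best : e0 ≤ bestApprox s x := tail_le_bestApprox s x
  -- block bound
  have hblock : ∀ j, Lj j ≤ (∑ i ∈ B j, g i) / Real.sqrt s := by
    intro j
    have hL1Bnn : 0 ≤ ∑ i ∈ B j, g i := Finset.sum_nonneg fun i _ => norm_nonneg _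
    by_cases hc : (B j).card = s
    · have hptle : ∀ i ∈ B (j + 1), (s : ℝ) * g i ≤ ∑ i' ∈ B j, g i' := by
        intro i hi
        have := Finset.card_nsmul_le_sum (B j) g (g i)
          (fun i' hi' => blk_order g s U₀ j i hi i' hi')
        rw [hc] at this
        simpa [nsmul_eq_mul] using this
      have hsq : Lj j ^ 2 ≤ ((∑ i ∈ B j, g i) / Real.sqrt s) ^ 2 := by
        have hLjsq : Lj j ^ 2 = ∑ i ∈ B (j + 1), g i ^ 2 := by
          rw [hLjdef]
          simp only
          rw [← sum_sq_eq, sum_sq_rst]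
        rw [hLjsq, div_pow, hsssq]
        have hbd : ∀ i ∈ B (j + 1), g i ^ 2 ≤ ((∑ i' ∈ B j, g i') / s) ^ 2 := by
          intro i hi
          have h1 := hptle i hi
          have hgnn : 0 ≤ g i := norm_nonneg _
          have h2 : g i ≤ (∑ i' ∈ B j, g i') / s := by
            rw [le_div_iff₀ hspos]; linarith
          exact pow_le_pow_left₀ hgnn h2 2
        calc ∑ i ∈ B (j + 1), g i ^ 2 ≤ ∑ _i ∈ B (j + 1), ((∑ i' ∈ B j, g i') / s) ^ 2 :=
              Finset.sum_le_sum hbd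
          _ = (B (j + 1)).card * ((∑ i' ∈ B j, g i') / s) ^ 2 := by
              rw [Finset.sum_const, nsmul_eq_mul]
          _ ≤ s * ((∑ i' ∈ B j, g i') / s) ^ 2 := by
              apply mul_le_mul_of_nonneg_right _ (by positivity)
              exact_mod_cast hBcard (j + 1)
          _ = (∑ i' ∈ B j, g i') ^ 2 / s := by
              field_simp
      exact le_of_sq_le_sq (norm_nonneg _) (by positivity) hsq
    · have hlt : (B j).card < s := lt_of_le_of_ne (hBcard j) hc
      have hempty : B (j + 1) = ∅ := blk_small g s U₀ j hlt
      have : Lj j = 0 := by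
        rw [hLjdef]; simp only; rw [hempty, rst_empty]
        exact norm_zero
      rw [this]
      positivity

  -- P bound
  have hGUdecomp : GU = ∑ j ∈ Finset.range N, ∑ i ∈ B j, g i := by
    have hdec := sum_rem_decomp g s U₀ g N
    rw [← hRdef, ← hBdef, hRN] at hdec
    simpa using hdec
  have hsumT0sq : ∑ i ∈ T₀, g i ^ 2 = L0 ^ 2 := by
    rw [hL0def, ← sum_sq_eq, sum_sq_rst]
  have hG0nn : 0 ≤ G0 := Finset.sum_nonneg fun i _ => norm_nonneg _
  have hG0le : G0 ≤ Real.sqrt s * L0 := by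
    have h1 : (∑ i ∈ T₀, g i) ^ 2 ≤ (T₀.card : ℝ) * ∑ i ∈ T₀, g i ^ 2 :=
      sq_sum_le_card_mul_sum_sq
    have h2 : (T₀.card : ℝ) ≤ (s : ℝ) := by exact_mod_cast hT₀card
    have h3 : 0 ≤ ∑ i ∈ T₀, g i ^ 2 := Finset.sum_nonneg fun i _ => sq_nonneg _
    apply le_of_sq_le_sq hG0nn (by positivity)
    rw [mul_pow, hsssq, ← hsumT0sq, hG0def]
    exact le_trans h1 (mul_le_mul_of_nonneg_right h2 h3)
  have hPbound : P ≤ L0 + 2 * (e0 / Real.sqrt s) := by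
    have h1 : P ≤ GU / Real.sqrt s := by
      calc P ≤ ∑ j ∈ Finset.range N, (∑ i ∈ B j, g i) / Real.sqrt s :=
            Finset.sum_le_sum fun j _ => hblock j
        _ = GU / Real.sqrt s := by rw [← Finset.sum_div, ← hGUdecomp]
    have h2 : GU / Real.sqrt s ≤ (G0 + 2 * e0) / Real.sqrt s := by gcongr
    have h3 : (G0 + 2 * e0) / Real.sqrt s = G0 / Real.sqrt s + 2 * (e0 / Real.sqrt s) := by
      ring
    have h4 : G0 / Real.sqrt s ≤ L0 := by
      rw [div_le_iff₀ hss]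
      exact le_trans hG0le (le_of_eq (mul_comm _ _))
    calc P ≤ GU / Real.sqrt s := h1
      _ ≤ (G0 + 2 * e0) / Real.sqrt s := h2
      _ = G0 / Real.sqrt s + 2 * (e0 / Real.sqrt s) := h3
      _ ≤ L0 + 2 * (e0 / Real.sqrt s) := add_le_add h4 le_rfl
  -- decomposition of h
  have hhsplit : h = rst T h + rst (R 1) h := by
    funext i
    by_cases hiT : i ∈ T
    · have hiR : i ∉ R 1 := by
        rw [hR1]
        intro hmem
        obtain ⟨hiU, hiB⟩ := Finset.mem_sdiff.mp hmem
        rcases Finset.mem_union.mp hiT with h' | h'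
        · exact (Finset.mem_sdiff.mp hiU).2 h'
        · exact hiB h'
      simp [rst, hiT, hiR]
    · have hiR : i ∈ R 1 := by
        rw [hR1]
        have hiT₀ : i ∉ T₀ := fun h' => hiT (Finset.mem_union_left _ h')
        have hiB0 : i ∉ B 0 := fun h' => hiT (Finset.mem_union_right _ h')
        exact Finset.mem_sdiff.mpr ⟨Finset.mem_sdiff.mpr ⟨Finset.mem_univ i, hiT₀⟩, hiB0⟩
      simp [rst, hiT, hiR]
  have hR1split : rst (R 1) h = ∑ j ∈ Finset.range N, rst (B (j + 1)) h := by
    have key : ∀ K : ℕ, rst (R 1) h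
        = (∑ j ∈ Finset.range K, rst (B (j + 1)) h) + rst (R (1 + K)) h := by
      intro K
      induction K with
      | zero => simp
      | succ K ih =>
        rw [ih, Finset.sum_range_succ]
        have hsp : rst (R (1 + K)) h = rst (B (1 + K)) h + rst (R (1 + (K + 1))) h := by
          have e1 : R (1 + (K + 1)) = R (1 + K) \ B (1 + K) := by
            rw [hRdef, hBdef, show 1 + (K + 1) = (1 + K) + 1 by omega]
            exact rem_succ g s U₀ (1 + K)
          rw [e1]
          exact rst_split (by rw [hRdef, hBdef]; exact blk_subset_rem g s U₀ (1 + K)) h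
        rw [hsp, show 1 + K = K + 1 by omega]
        abel
    have hfin := key N
    rw [show 1 + N = N + 1 by omega, hRN1, rst_empty] at hfin
    simpa using hfin
  have hAh : A.mulVec h = A.mulVec (rst T h)
      + ∑ j ∈ Finset.range N, A.mulVec (rst (B (j + 1)) h) := by
    conv_lhs => rw [hhsplit]
    rw [Matrix.mulVec_add, hR1split, mulVec_sum]
  -- sparsity
  have hsparseT : IsSparse (2 * s) (rst T h) := rst_sparse T h hTcard
  have hsparseT₀ : IsSparse s (rst T₀ h) := rst_sparse _ _ hT₀card
  have hsparseB : ∀ j, IsSparse s (rst (B j) h) := fun j => rst_sparse _ _ (hBcard j)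
  -- cross bounds
  have hdisjsupp : ∀ j : ℕ, ∀ i, rst T₀ h i = 0 ∨ rst (B (j + 1)) h i = 0 := by
    intro j i
    by_cases hiT : i ∈ T₀
    · right
      have hnB : i ∉ B (j + 1) := fun hmem => (Finset.mem_sdiff.mp (hBU (j + 1) hmem)).2 hiT
      simp [rst, hnB]
    · left; simp [rst, hiT]
  have hdisjsupp0 : ∀ j : ℕ, ∀ i, rst (B 0) h i = 0 ∨ rst (B (j + 1)) h i = 0 := by
    intro j i
    by_cases hiB : i ∈ B 0
    · right
      have hd : Disjoint (B 0) (B (j + 1)) := by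
        rw [hBdef]; exact blk_disjoint g s U₀ (Nat.succ_pos j)
      have hnB : i ∉ B (j + 1) := fun hmem => Finset.disjoint_left.mp hd hiB hmem
      simp [rst, hnB]
    · left; simp [rst, hiB]
  have hcross : ∀ j : ℕ,
      |rinner (A.mulVec (rst T₀ h)) (A.mulVec (rst (B (j + 1)) h))| ≤ δ * (L0 * Lj j) :=
    fun j => restricted_orth hA (le_of_lt hδ0) hsparseT₀ (hsparseB (j + 1)) (hdisjsupp j)
  have hcross0 : ∀ j : ℕ,
      |rinner (A.mulVec (rst (B 0) h)) (A.mulVec (rst (B (j + 1)) h))| ≤ δ * (L1b * Lj j) :=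
    fun j => restricted_orth hA (le_of_lt hδ0) (hsparseB 0) (hsparseB (j + 1)) (hdisjsupp0 j)
  have hTsplit : rst T h = rst T₀ h + rst (B 0) h := rst_union hdisjT₀B0 h
  -- main identity
  have hident : AL ^ 2 = rinner (A.mulVec (rst T h)) (A.mulVec h)
      - ∑ j ∈ Finset.range N, rinner (A.mulVec (rst T h)) (A.mulVec (rst (B (j + 1)) h)) := by
    rw [hAh, rinner_add_right, rinner_sum]
    have hself : rinner (A.mulVec (rst T h)) (A.mulVec (rst T h)) = AL ^ 2 := rinner_self _
    rw [hself]
    ring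
  -- measurement error bound
  have hAH : ‖E (A.mulVec h)‖ ≤ 2 * η := by
    have e1 : A.mulVec h = (y - A.mulVec x) - (y - A.mulVec xs) := by
      rw [hhdef, Matrix.mulVec_sub]
      abel
    rw [e1, E_sub]
    calc ‖E (y - A.mulVec x) - E (y - A.mulVec xs)‖
        ≤ ‖E (y - A.mulVec x)‖ + ‖E (y - A.mulVec xs)‖ := norm_sub_le _ _
      _ ≤ η + η := add_le_add (le_of_eq_of_le (l2_eq _).symm hy)
          (le_of_eq_of_le (l2_eq _).symm hxs)
      _ = 2 * η := by ring
  -- RIP bounds on T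
  have hrip1 : (1 - δ) * LT ^ 2 ≤ AL ^ 2 := (hasRIP_bounds hA hsparseT).1
  have hrip2 : AL ^ 2 ≤ (1 + δ) * LT ^ 2 := (hasRIP_bounds hA hsparseT).2
  have hLTsq : LT ^ 2 = L0 ^ 2 + L1b ^ 2 := by
    rw [hLTdef, hL0def, hL1bdef, ← sum_sq_eq, ← sum_sq_eq, ← sum_sq_eq,
      sum_sq_rst, sum_sq_rst, sum_sq_rst, hTdef, Finset.sum_union hdisjT₀B0]
  have hLTnn : 0 ≤ LT := norm_nonneg _
  have hL0nn : 0 ≤ L0 := norm_nonneg _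
  have hL1bnn : 0 ≤ L1b := norm_nonneg _
  have hALnn : 0 ≤ AL := norm_nonneg _
  have hL0LT : L0 ≤ LT := le_of_sq_le_sq hL0nn hLTnn
    (by linarith only [hLTsq, sq_nonneg L1b])
  have hsum01 : L0 + L1b ≤ Real.sqrt 2 * LT := by
    apply le_of_sq_le_sq (by positivity) (by positivity)
    rw [mul_pow, hsqrt2]
    nlinarith only [hLTsq, sq_nonneg (L0 - L1b)]
  have hAL2LT : AL ≤ 2 * LT := by
    apply le_of_sq_le_sq hALnn (by positivity)
    have hmul := mul_le_mul_of_nonneg_right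
      (show 1 + δ ≤ 4 by linarith only [hδ1]) (sq_nonneg LT)
    have hex : (2 * LT) ^ 2 = 4 * LT ^ 2 := by ring
    linarith only [hrip2, hmul, hex]
  -- combine
  have hALsq_ub : AL ^ 2 ≤ AL * (2 * η) + δ * ((L0 + L1b) * P) := by
    rw [hident]
    have hterm1 : rinner (A.mulVec (rst T h)) (A.mulVec h) ≤ AL * (2 * η) := by
      calc rinner (A.mulVec (rst T h)) (A.mulVec h)
          ≤ |rinner (A.mulVec (rst T h)) (A.mulVec h)| := le_abs_self _
        _ ≤ ‖E (A.mulVec (rst T h))‖ * ‖E (A.mulVec h)‖ := abs_rinner_le _ _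
        _ ≤ AL * (2 * η) := mul_le_mul_of_nonneg_left hAH hALnn
    have hterm2 : -(∑ j ∈ Finset.range N,
        rinner (A.mulVec (rst T h)) (A.mulVec (rst (B (j + 1)) h)))
        ≤ δ * ((L0 + L1b) * P) := by
      have hptwise : ∀ j ∈ Finset.range N,
          -(rinner (A.mulVec (rst T h)) (A.mulVec (rst (B (j + 1)) h)))
            ≤ δ * ((L0 + L1b) * Lj j) := by
        intro j _
        rw [hTsplit, Matrix.mulVec_add, rinner_add_left]
        have c1 := hcross j
        have c2 := hcross0 j
        have d1 := neg_abs_le (rinner (A.mulVec (rst T₀ h)) (A.mulVec (rst (B (j + 1)) h)))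
        have d2 := neg_abs_le (rinner (A.mulVec (rst (B 0) h)) (A.mulVec (rst (B (j + 1)) h)))
        linarith only [c1, c2, d1, d2]
      calc -(∑ j ∈ Finset.range N,
            rinner (A.mulVec (rst T h)) (A.mulVec (rst (B (j + 1)) h)))
          = ∑ j ∈ Finset.range N,
            -(rinner (A.mulVec (rst T h)) (A.mulVec (rst (B (j + 1)) h))) := by
            rw [Finset.sum_neg_distrib]
        _ ≤ ∑ j ∈ Finset.range N, δ * ((L0 + L1b) * Lj j) := Finset.sum_le_sum hptwise
        _ = δ * ((L0 + L1b) * P) := by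
            rw [hPdef, Finset.mul_sum, Finset.mul_sum]
    linarith only [hterm1, hterm2]
  have hQ : P ≤ LT + 2 * (e0 / Real.sqrt s) := by linarith only [hPbound, hL0LT]
  -- bound on LT
  have hLTmul : β * LT ≤ 4 * η + 2 * Real.sqrt 2 * δ * (e0 / Real.sqrt s) := by
    have hRHSnn : 0 ≤ 4 * η + 2 * Real.sqrt 2 * δ * (e0 / Real.sqrt s) := by positivity
    rcases eq_or_lt_of_le hLTnn with heq | hpos
    · rw [← heq]; simpa using hRHSnn
    · have h2 : δ * ((L0 + L1b) * P)
          ≤ δ * ((Real.sqrt 2 * LT) * (LT + 2 * (e0 / Real.sqrt s))) := by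
        apply mul_le_mul_of_nonneg_left _ (le_of_lt hδ0)
        apply mul_le_mul hsum01 hQ hP0 (by positivity)
      have h3 : AL * (2 * η) ≤ 4 * η * LT := by
        have := mul_le_mul_of_nonneg_right hAL2LT (show (0:ℝ) ≤ 2 * η by linarith only [hη])
        linarith only [this]
      have h4 : β * LT ^ 2 ≤ (4 * η + 2 * Real.sqrt 2 * δ * (e0 / Real.sqrt s)) * LT := by
        linarith only [hrip1, hALsq_ub, h3, h2, hβdef]
      exact le_of_mul_le_mul_right (by linarith only [h4]) hpos
  -- tail bound
  have hR1sq : ‖E (rst (R 1) h)‖ ^ 2 = ∑ j ∈ Finset.range N, (Lj j) ^ 2 := by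
    rw [← sum_sq_eq, sum_sq_rst]
    have hdec := sum_rem_decomp_from g s U₀ (fun i => g i ^ 2) 1 N
    rw [← hRdef, ← hBdef, show 1 + N = N + 1 by omega, hRN1] at hdec
    simp only [Finset.sum_empty, add_zero] at hdec
    rw [hdec]
    apply Finset.sum_congr rfl
    intro j _
    rw [hLjdef]
    simp only
    rw [← sum_sq_eq, sum_sq_rst, show 1 + j = j + 1 by omega]
  have hR1P : ‖E (rst (R 1) h)‖ ≤ P := by
    apply le_of_sq_le_sq (norm_nonneg _) hP0
    rw [hR1sq, hPdef]
    exact Finset.sum_sq_le_sq_sum_of_nonneg fun j _ => norm_nonneg _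
  have hfinal1 : ‖E h‖ ≤ LT + P := by
    have e1 : ‖E h‖ = ‖E (rst T h + rst (R 1) h)‖ := congrArg (fun v => ‖E v‖) hhsplit
    rw [e1, E_add]
    exact le_trans (norm_add_le _ _) (add_le_add (le_refl LT) hR1P)
  -- conclusion
  set ci : ℝ := β⁻¹ with hcidef
  have hci : 0 < ci := inv_pos.mpr hβ
  have hci2 : β * ci = 1 := mul_inv_cancel₀ (ne_of_gt hβ)
  set t : ℝ := e0 / Real.sqrt s with htdef
  set t' : ℝ := bestApprox s x / Real.sqrt s with ht'def
  have htnn : 0 ≤ t := by positivity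
  have htt' : t ≤ t' := by
    rw [htdef, ht'def]
    gcongr
  have hsqrt2lt : Real.sqrt 2 < 2 := by nlinarith only [hsqrt2, hsqrt2pos]
  have hsd : Real.sqrt 2 * δ ≤ 2 := by
    have := mul_le_mul_of_nonneg_left (le_of_lt hδ1) (le_of_lt hsqrt2pos)
    rw [mul_one] at this
    linarith only [this, hsqrt2lt]
  have hLT' : LT ≤ (4 * η + 2 * Real.sqrt 2 * δ * t) * ci := by
    have := mul_le_mul_of_nonneg_right hLTmul (le_of_lt hci)
    calc LT = β * LT * ci := by rw [mul_comm β LT, mul_assoc, hci2, mul_one]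
      _ ≤ (4 * η + 2 * Real.sqrt 2 * δ * t) * ci := this
  have hfinal2 : ‖E h‖ ≤ (8 * ci + 2) * t' + (8 * ci) * η := by
    have h5 : Real.sqrt 2 * δ * (t * ci) ≤ 2 * (t * ci) :=
      mul_le_mul_of_nonneg_right hsd (mul_nonneg htnn (le_of_lt hci))
    have h6 : t * ci ≤ t' * ci := mul_le_mul_of_nonneg_right htt' (le_of_lt hci)
    have h7 : ‖E h‖ ≤ 2 * LT + 2 * t := by linarith only [hfinal1, hQ, hL0LT]
    linarith only [h7, hLT', h5, h6, htt']
  have hgoaleq : (8 / β + 2) * bestApprox s x / Real.sqrt s + (8 / β) * η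
      = (8 * ci + 2) * t' + (8 * ci) * η := by
    rw [ht'def, hcidef, div_eq_mul_inv 8 β]
    ring
  have hl2 : l2norm (xs - x) = ‖E h‖ := by rw [hhdef] at *; rw [l2_eq]
  rw [hgoaleq, hl2]
  exact hfinal2

end RIPW

namespace RIPW
variable {N : ℕ}

lemma flip_flip (x : Fin N → ℂ) : flipVec (flipVec x) = x := by
  funext i
  simp [flipVec, Fin.rev_rev]

lemma l1_flip (z : Fin N → ℂ) : l1norm (flipVec z) = l1norm z := by
  unfold l1norm flipVec
  exact Fintype.sum_equiv (Fin.revPerm) _ _ fun i => rfl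

lemma flip_sub (x w : Fin N → ℂ) : flipVec (x - w) = flipVec x - flipVec w := rfl

lemma sparse_flip {s : ℕ} {w : Fin N → ℂ} (hw : IsSparse s w) : IsSparse s (flipVec w) := by
  unfold IsSparse at *
  have himg : {i | flipVec w i ≠ 0} = Fin.rev '' {i | w i ≠ 0} := by
    ext i
    simp only [Set.mem_setOf_eq, Set.mem_image, flipVec]
    constructor
    · intro hi
      exact ⟨i.rev, hi, Fin.rev_rev i⟩
    · rintro ⟨j, hj, rfl⟩
      rwa [Fin.rev_rev]
  rw [himg, Set.ncard_image_of_injective _ Fin.rev_injective]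
  exact hw

lemma bestApprox_flip (s : ℕ) (x : Fin N → ℂ) :
    bestApprox s (flipVec x) = bestApprox s x := by
  unfold bestApprox
  congr 1
  ext t
  constructor
  · rintro ⟨w, hw, rfl⟩
    refine ⟨flipVec w, sparse_flip hw, ?_⟩
    have h1 : flipVec x - w = flipVec (x - flipVec w) := by
      rw [flip_sub, flip_flip]
    rw [h1, l1_flip]
  · rintro ⟨w, hw, rfl⟩
    refine ⟨flipVec w, sparse_flip hw, ?_⟩
    rw [← flip_sub, l1_flip]

end RIPW


/-- stable and robust recovery under the RIP.  For every
`δ ∈ (0, √2 − 1)` there are constants `C₀, C₁ > 0` (depending only on `δ`) such that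
whenever `A` has the RIP of order `2s` with constant `δ` and `‖y − Ax‖₂ ≤ η`, any ℓ¹
minimizer `x♯` subject to `‖y − Az‖₂ ≤ η` satisfies
`‖x♯ − x‖₂ ≤ C₀ σ_s(x)₁/√s + C₁ η`.  Moreover `σ_s` is invariant under flipping, so
the same bound holds for recovering the flip of `x` with the same matrix. -/
theorem rip_stable_robust_recovery (δ : ℝ) (hδ0 : 0 < δ) (hδ : δ < Real.sqrt 2 - 1) :
    ∃ C₀ : ℝ, 0 < C₀ ∧ ∃ C₁ : ℝ, 0 < C₁ ∧
      ∀ (m N s : ℕ), 1 ≤ s →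
      ∀ A : Matrix (Fin m) (Fin N) ℂ, HasRIP A (2 * s) δ →
      ∀ x : Fin N → ℂ, ∀ η : ℝ, 0 ≤ η →
      (∀ y : Fin m → ℂ, l2norm (y - A.mulVec x) ≤ η →
        ∀ xs : Fin N → ℂ,
          l2norm (y - A.mulVec xs) ≤ η →
          (∀ z : Fin N → ℂ, l2norm (y - A.mulVec z) ≤ η → l1norm xs ≤ l1norm z) →
          l2norm (xs - x) ≤ C₀ * bestApprox s x / Real.sqrt s + C₁ * η) ∧
      bestApprox s (flipVec x) = bestApprox s x ∧
      (∀ y' : Fin m → ℂ, l2norm (y' - A.mulVec (flipVec x)) ≤ η →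
        ∀ xs : Fin N → ℂ,
          l2norm (y' - A.mulVec xs) ≤ η →
          (∀ z : Fin N → ℂ, l2norm (y' - A.mulVec z) ≤ η → l1norm xs ≤ l1norm z) →
          l2norm (xs - flipVec x) ≤ C₀ * bestApprox s x / Real.sqrt s + C₁ * η) := by
  classical
  have hsqrt2 : (Real.sqrt 2) ^ 2 = 2 := Real.sq_sqrt (by norm_num)
  have hsqrt2pos : 0 < Real.sqrt 2 := Real.sqrt_pos.mpr (by norm_num)
  have hbeta : 0 < 1 - δ - Real.sqrt 2 * δ := by nlinarith
  refine ⟨8 / (1 - δ - Real.sqrt 2 * δ) + 2, by positivity,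
    8 / (1 - δ - Real.sqrt 2 * δ), by positivity, ?_⟩
  intro m N s hs A hA x η hη
  refine ⟨?_, RIPW.bestApprox_flip s x, ?_⟩
  · intro y hy xs hxs hmin
    exact RIPW.main_recovery δ hδ0 hδ s hs A hA x η hη y hy xs hxs hmin
  · intro y' hy' xs hxs hmin
    have := RIPW.main_recovery δ hδ0 hδ s hs A hA (flipVec x) η hη y' hy' xs hxs hmin
    rwa [RIPW.bestApprox_flip] at this
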